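/- Existence of the constrained exponential-family solution (Lemma 3.2, existence part): let θ₀ ∈ ℝ^Λ, set α_{0,λ} = ∫_E f_{θ₀} ψ_λ dμ for λ ∈ Λ, and let b = exp(‖log f_{θ₀}‖_∞) and e = exp(1). If α ∈ ℝ^Λ satisfies ‖α − α₀‖₂ ≤ 1/(2·e·b·A), then there exists θ(α) ∈ ℝ^Λ such that ∫_E f_{θ(α)} ψ_λ dμ = α_λ for all λ ∈ Λ. -/

import Mathlib

open MeasureTheory

lemma exp_taylor_lb {M v : ℝ} (hM : |v| ≤ M) :
    1 + v + Real.exp (-M) * v ^ 2 / 2 ≤ Real.exp v := by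
  set c := Real.exp (-M) with hc
  have hc1 : c ≤ 1 := Real.exp_le_one_iff.2 (by
    have : (0:ℝ) ≤ M := le_trans (abs_nonneg v) hM
    linarith)
  have hc0 : 0 < c := Real.exp_pos _
  set f : ℝ → ℝ := fun v => Real.exp v - 1 - v - c * v ^ 2 / 2 with hf
  have hderiv : ∀ t : ℝ, HasDerivAt f (Real.exp t - 1 - c * t) t := by
    intro t
    have h1 : HasDerivAt (fun v : ℝ => c * v ^ 2 / 2) (c * t) t := by
      have := ((hasDerivAt_pow 2 t).const_mul c).div_const 2
      exact this.congr_deriv (by rw [show (2:ℕ) - 1 = 1 from rfl]; push_cast; ring)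
    have := (((Real.hasDerivAt_exp t).sub_const 1).sub (hasDerivAt_id t)).sub h1
    exact this
  have hdiff : ∀ t : ℝ, DifferentiableAt ℝ f t := fun t => (hderiv t).differentiableAt
  have hfc : Continuous f := by
    have : Differentiable ℝ f := fun t => hdiff t
    exact this.continuous
  have hf0 : f 0 = 0 := by simp [hf]
  have key : 0 ≤ f v := by
    rcases le_or_gt 0 v with hv | hv
    · have hmono : MonotoneOn f (Set.Icc 0 M) := by
        apply monotoneOn_of_deriv_nonneg (convex_Icc 0 M) hfc.continuousOn
        · exact fun t _ => (hdiff t).differentiableWithinAt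
        · intro t ht
          rw [(hderiv t).deriv]
          simp only [Set.mem_Icc, interior_Icc, Set.mem_Ioo] at ht
          have h1 : t + 1 ≤ Real.exp t := Real.add_one_le_exp t
          nlinarith [ht.1]
      have h0m : (0:ℝ) ∈ Set.Icc 0 M := ⟨le_refl _, le_trans (abs_nonneg v) hM⟩
      have hvm : v ∈ Set.Icc 0 M := ⟨hv, le_trans (le_abs_self v) hM⟩
      have := hmono h0m hvm hv
      rwa [hf0] at this
    · have hanti : AntitoneOn f (Set.Icc (-M) 0) := by
        apply antitoneOn_of_deriv_nonpos (convex_Icc (-M) 0) hfc.continuousOn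
        · exact fun t _ => (hdiff t).differentiableWithinAt
        · intro t ht
          rw [(hderiv t).deriv]
          simp only [interior_Icc, Set.mem_Ioo] at ht
          have h1 : Real.exp t - 1 ≤ t * Real.exp t := by
            have := Real.add_one_le_exp (-t)
            have hp := Real.exp_pos t
            have : (1 - t) * Real.exp t ≤ Real.exp (-t) * Real.exp t := by
              nlinarith
            rw [← Real.exp_add] at this
            simp at this
            nlinarith
          have h2 : t * Real.exp t ≤ t * c := by
            apply mul_le_mul_of_nonpos_left _ (le_of_lt ht.2)
            exact Real.exp_le_exp.2 (le_of_lt ht.1)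
          linarith
      have hvm : v ∈ Set.Icc (-M) 0 := ⟨neg_le_of_abs_le hM, le_of_lt hv⟩
      have h0m : (0:ℝ) ∈ Set.Icc (-M) 0 := ⟨by linarith [le_trans (abs_nonneg v) hM], le_refl _⟩
      have := hanti hvm h0m (le_of_lt hv)
      rwa [hf0] at this
  simp only [hf] at key
  linarith

lemma integrable_of_bdd {E : Type*} [MeasurableSpace E] {μ : Measure E} [IsFiniteMeasure μ]
    {w : E → ℝ} {C : ℝ} (hw : Measurable w) (hb : ∀ x, |w x| ≤ C) : Integrable w μ :=
  (integrable_const C).mono' hw.aestronglyMeasurable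
    (Filter.Eventually.of_forall fun x => by simpa [Real.norm_eq_abs] using hb x)

lemma cs_abs {ι : Type*} [Fintype ι] (f g : ι → ℝ) :
    |∑ i, f i * g i| ≤ Real.sqrt (∑ i, f i ^ 2) * Real.sqrt (∑ i, g i ^ 2) := by
  have h := Finset.sum_mul_sq_le_sq_mul_sq Finset.univ f g
  calc |∑ i, f i * g i| = Real.sqrt ((∑ i, f i * g i) ^ 2) := (Real.sqrt_sq_eq_abs _).symm
    _ ≤ Real.sqrt ((∑ i, f i ^ 2) * ∑ i, g i ^ 2) := Real.sqrt_le_sqrt h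
    _ = _ := Real.sqrt_mul (Finset.sum_nonneg fun i _ => sq_nonneg _) _

/-- Lemma 3.2, existence part: with `α_{0,λ} = ∫ f_{θ₀} ψ_λ dμ`,
`b = exp(‖log f_{θ₀}‖_∞)` and `e = exp 1`, if `‖α − α₀‖₂ ≤ 1/(2·e·b·A)` then there exists
`θ(α)` with `∫ f_{θ(α)} ψ_λ dμ = α_λ` for all `λ`. -/
theorem information_projection_exists
    {E : Type*} [MeasurableSpace E] (μ : Measure E) [IsFiniteMeasure μ]
    {Λ : Type*} [Fintype Λ] [DecidableEq Λ] (ψ : Λ → E → ℝ)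
    (hmeas : ∀ l, Measurable (ψ l))
    (hbdd : ∀ l, ∃ C : ℝ, ∀ x, |ψ l x| ≤ C)
    (horth : ∀ l k, ∫ x, ψ l x * ψ k x ∂μ = if l = k then (1 : ℝ) else 0)
    (A : ℝ) (hApos : 0 < A)
    (hA : ∀ c : Λ → ℝ, ∀ x, |∑ l, c l * ψ l x| ≤
      A * Real.sqrt (∫ y, (∑ l, c l * ψ l y) ^ 2 ∂μ))
    (θ₀ : Λ → ℝ) (α : Λ → ℝ)
    (hclose : Real.sqrt (∑ l,
        (α l - ∫ x, Real.exp (∑ l', θ₀ l' * ψ l' x) * ψ l x ∂μ) ^ 2) ≤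
      1 / (2 * Real.exp 1 * Real.exp (⨆ x, |∑ l, θ₀ l * ψ l x|) * A)) :
    ∃ θα : Λ → ℝ, (∀ l, ∫ x, Real.exp (∑ l', θα l' * ψ l' x) * ψ l x ∂μ = α l) := by
  classical
  choose C₀ hC₀ using hbdd
  set C : Λ → ℝ := fun l => |C₀ l| with hCdef
  have hC : ∀ l x, |ψ l x| ≤ C l := fun l x => (hC₀ l x).trans (le_abs_self _)
  have hC0 : ∀ l, 0 ≤ C l := fun l => abs_nonneg _
  -- measurability of linear combos
  have msum : ∀ θ : Λ → ℝ, Measurable (fun x => ∑ l, θ l * ψ l x) :=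
    fun θ => Finset.measurable_sum _ fun l _ => (hmeas l).const_mul (θ l)
  -- uniform bound on linear combos
  have hsum : ∀ (θ : Λ → ℝ) (x : E), |∑ l, θ l * ψ l x| ≤ ∑ l, |θ l| * C l := by
    intro θ x
    refine (Finset.abs_sum_le_sum_abs _ _).trans (Finset.sum_le_sum fun l _ => ?_)
    rw [abs_mul]
    exact mul_le_mul_of_nonneg_left (hC l x) (abs_nonneg _)
  -- integrability of exp * bounded weight
  have hint : ∀ (θ : Λ → ℝ) (w : E → ℝ) (Cw : ℝ), Measurable w → (∀ x, |w x| ≤ Cw) →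
      Integrable (fun x => Real.exp (∑ l, θ l * ψ l x) * w x) μ := by
    intro θ w Cw hwm hwb
    refine integrable_of_bdd (C := Real.exp (∑ l, |θ l| * C l) * Cw) ((msum θ).exp.mul hwm) ?_
    intro x
    rw [abs_mul, abs_of_pos (Real.exp_pos _)]
    exact mul_le_mul (Real.exp_le_exp.2 ((le_abs_self _).trans (hsum θ x)))
      (hwb x) (abs_nonneg _) (Real.exp_pos _).le
  have hintexp : ∀ θ : Λ → ℝ, Integrable (fun x => Real.exp (∑ l, θ l * ψ l x)) μ := by
    intro θ
    have := hint θ (fun _ => 1) 1 measurable_const (fun x => by norm_num)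
    simpa using this
  -- L2 norm identity
  have hL2 : ∀ c : Λ → ℝ, ∫ x, (∑ l, c l * ψ l x) ^ 2 ∂μ = ∑ l, c l ^ 2 := by
    intro c
    have hexp : ∀ x, (∑ l, c l * ψ l x) ^ 2 = ∑ l, ∑ k, (c l * c k) * (ψ l x * ψ k x) := by
      intro x
      rw [sq, Finset.sum_mul_sum]
      exact Finset.sum_congr rfl fun l _ => Finset.sum_congr rfl fun k _ => by ring
    have hintprod : ∀ l k : Λ, Integrable (fun x => (c l * c k) * (ψ l x * ψ k x)) μ := by
      intro l k
      exact (integrable_of_bdd (C := C l * C k) ((hmeas l).mul (hmeas k)) fun x => by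
        rw [Pi.mul_apply, abs_mul]
        exact mul_le_mul (hC l x) (hC k x) (abs_nonneg _) (hC0 l)).const_mul _
    simp_rw [hexp]
    rw [integral_finset_sum _ (fun l _ => integrable_finset_sum _ fun k _ => hintprod l k)]
    have : ∀ l : Λ, ∫ x, ∑ k, (c l * c k) * (ψ l x * ψ k x) ∂μ
        = ∑ k, (c l * c k) * if l = k then (1:ℝ) else 0 := by
      intro l
      rw [integral_finset_sum _ fun k _ => hintprod l k]
      exact Finset.sum_congr rfl fun k _ => by rw [integral_const_mul, horth]
    simp_rw [this, mul_ite, mul_one, mul_zero, Finset.sum_ite_eq, Finset.mem_univ, if_true, sq]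
  -- sup-norm bound via hA
  have hA' : ∀ (c : Λ → ℝ) (x : E), |∑ l, c l * ψ l x| ≤ A * Real.sqrt (∑ l, c l ^ 2) := by
    intro c x
    have := hA c x
    rwa [hL2] at this
  -- coordinate bound
  have hcoord : ∀ (c : Λ → ℝ) (l : Λ), |c l| ≤ Real.sqrt (∑ k, c k ^ 2) := by
    intro c l
    rw [← Real.sqrt_sq_eq_abs]
    exact Real.sqrt_le_sqrt (Finset.single_le_sum (f := fun k => c k ^ 2)
      (fun k _ => sq_nonneg _) (Finset.mem_univ l))
  -- the sup bound
  set S : ℝ := ⨆ x, |∑ l, θ₀ l * ψ l x| with hSdef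
  have hS : ∀ x, |∑ l, θ₀ l * ψ l x| ≤ S := by
    intro x
    have hbd : BddAbove (Set.range fun y => |∑ l, θ₀ l * ψ l y|) := by
      refine ⟨∑ l, |θ₀ l| * C l, ?_⟩
      rintro _ ⟨y, rfl⟩
      exact hsum θ₀ y
    exact le_ciSup hbd x
  -- objective function
  set Z : (Λ → ℝ) → ℝ := fun θ => ∫ x, Real.exp (∑ l, θ l * ψ l x) ∂μ with hZdef
  set g : (Λ → ℝ) → ℝ := fun θ => Z θ - ∑ l, α l * θ l with hgdef
  have hZcont : Continuous Z := by
    rw [continuous_iff_continuousAt]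
    intro θ₁
    apply continuousAt_of_dominated (bound := fun _ => Real.exp (∑ l, (|θ₁ l| + 1) * C l))
    · exact Filter.Eventually.of_forall fun θ => (msum θ).exp.aestronglyMeasurable
    · refine Filter.eventually_of_mem (Metric.ball_mem_nhds θ₁ one_pos) fun θ hθ => ?_
      refine Filter.Eventually.of_forall fun x => ?_
      rw [Real.norm_eq_abs, abs_of_pos (Real.exp_pos _)]
      refine Real.exp_le_exp.2 (((le_abs_self _).trans (hsum θ x)).trans ?_)
      refine Finset.sum_le_sum fun l _ => mul_le_mul_of_nonneg_right ?_ (hC0 l)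
      have h1 : |θ l - θ₁ l| ≤ dist θ θ₁ := by
        rw [dist_eq_norm]
        simpa [Real.norm_eq_abs] using norm_le_pi_norm (θ - θ₁) l
      have h2 : dist θ θ₁ < 1 := hθ
      calc |θ l| ≤ |θ₁ l| + |θ l - θ₁ l| := by
            have := abs_add_le (θ₁ l) (θ l - θ₁ l); simpa using this
        _ ≤ |θ₁ l| + 1 := by linarith
    · exact integrable_const _
    · refine Filter.Eventually.of_forall fun x => ?_
      exact (Real.continuous_exp.comp
        (continuous_finset_sum _ fun l _ => (continuous_apply l).mul continuous_const)).continuousAt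
  have hgcont : Continuous g :=
    hZcont.sub (continuous_finset_sum _ fun l _ => continuous_const.mul (continuous_apply l))
  -- the constraint set
  set n : (Λ → ℝ) → ℝ := fun θ => Real.sqrt (∑ l, (θ l - θ₀ l) ^ 2) with hndef
  have hncont : Continuous n := by
    apply Real.continuous_sqrt.comp
    exact continuous_finset_sum _ fun l _ => ((continuous_apply l).sub continuous_const).pow 2
  set K : Set (Λ → ℝ) := {θ | n θ ≤ A⁻¹} with hKdef
  have hKcpt : IsCompact K := by
    refine Metric.isCompact_of_isClosed_isBounded (isClosed_le hncont continuous_const) ?_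
    refine (Metric.isBounded_closedBall (x := θ₀) (r := A⁻¹)).subset fun θ hθ => ?_
    rw [Metric.mem_closedBall, dist_eq_norm]
    rw [pi_norm_le_iff_of_nonneg (by positivity)]
    intro l
    rw [Real.norm_eq_abs]
    exact (hcoord (θ - θ₀) l).trans hθ
  have hK0 : θ₀ ∈ K := by
    simp only [hKdef, Set.mem_setOf_eq, hndef]
    simp [Real.sqrt_zero, inv_nonneg, hApos.le]
  obtain ⟨θm, hθmK, hθmmin⟩ := hKcpt.exists_isMinOn ⟨θ₀, hK0⟩ hgcont.continuousOn
  set α₀ : Λ → ℝ := fun l => ∫ x, Real.exp (∑ l', θ₀ l' * ψ l' x) * ψ l x ∂μ with hα₀def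
  set nα : ℝ := Real.sqrt (∑ l, (α l - α₀ l) ^ 2) with hnαdef
  -- the key convexity lower bound
  have hB : ∀ θ ∈ K, g θ₀ - nα * n θ + Real.exp (-1) * Real.exp (-S) / 2 * n θ ^ 2 ≤ g θ := by
    intro θ hθ
    have hθ' : n θ ≤ A⁻¹ := hθ
    set u : Λ → ℝ := fun l => θ l - θ₀ l with hudef
    have hnn : (0:ℝ) ≤ n θ := Real.sqrt_nonneg _
    have hsumu : ∑ l, u l ^ 2 = ∑ l, (θ l - θ₀ l) ^ 2 := rfl
    have hnu : Real.sqrt (∑ l, u l ^ 2) = n θ := rfl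
    have hn2 : n θ ^ 2 = ∑ l, u l ^ 2 := by
      rw [← hnu]
      exact Real.sq_sqrt (Finset.sum_nonneg fun l _ => sq_nonneg _)
    have hsv : ∀ x, ∑ l, θ l * ψ l x = (∑ l, θ₀ l * ψ l x) + ∑ l, u l * ψ l x := by
      intro x
      rw [← Finset.sum_add_distrib]
      exact Finset.sum_congr rfl fun l _ => by simp only [hudef]; ring
    have hvb : ∀ x, |∑ l, u l * ψ l x| ≤ 1 := by
      intro x
      refine (hA' u x).trans ?_
      rw [hnu]
      calc A * n θ ≤ A * A⁻¹ := mul_le_mul_of_nonneg_left hθ' hApos.le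
        _ = 1 := mul_inv_cancel₀ hApos.ne'
    have hpt : ∀ x, Real.exp (-1) * Real.exp (-S) / 2 * (∑ l, u l * ψ l x) ^ 2
        + Real.exp (∑ l, θ₀ l * ψ l x)
        + Real.exp (∑ l, θ₀ l * ψ l x) * (∑ l, u l * ψ l x)
        ≤ Real.exp (∑ l, θ l * ψ l x) := by
      intro x
      rw [hsv x, Real.exp_add]
      set s := ∑ l, θ₀ l * ψ l x with hs
      set v := ∑ l, u l * ψ l x with hv
      have h1 : 1 + v + Real.exp (-1) * v ^ 2 / 2 ≤ Real.exp v := exp_taylor_lb (hvb x)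
      have h2 : Real.exp (-S) ≤ Real.exp s := Real.exp_le_exp.2 (neg_le_of_abs_le (hS x))
      have h3 := Real.exp_pos s
      nlinarith [mul_le_mul_of_nonneg_left h1 h3.le,
        mul_le_mul_of_nonneg_right h2 (by positivity : (0:ℝ) ≤ Real.exp (-1) * v ^ 2 / 2),
        Real.exp_pos (-1), sq_nonneg v]
    have Iv : Integrable (fun x => (∑ l, u l * ψ l x) ^ 2) μ := by
      refine integrable_of_bdd (C := 1) ((msum u).pow_const 2) fun x => ?_
      rw [abs_of_nonneg (sq_nonneg _)]
      nlinarith [hvb x, abs_nonneg (∑ l, u l * ψ l x), sq_abs (∑ l, u l * ψ l x)]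
    have Ie : Integrable (fun x => Real.exp (∑ l, θ₀ l * ψ l x)) μ := hintexp θ₀
    have Iev : Integrable (fun x => Real.exp (∑ l, θ₀ l * ψ l x) * ∑ l, u l * ψ l x) μ :=
      hint θ₀ _ 1 (msum u) hvb
    have Iθ : Integrable (fun x => Real.exp (∑ l, θ l * ψ l x)) μ := hintexp θ
    have hmono := integral_mono (μ := μ) (((Iv.const_mul _).add Ie).add Iev) Iθ fun x => hpt x
    simp only [Pi.add_apply] at hmono
    have I12 : Integrable (fun x => Real.exp (-1) * Real.exp (-S) / 2 * (∑ l, u l * ψ l x) ^ 2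
        + Real.exp (∑ l, θ₀ l * ψ l x)) μ := by exact (Iv.const_mul _).add Ie
    have I1 : Integrable (fun x => Real.exp (-1) * Real.exp (-S) / 2 * (∑ l, u l * ψ l x) ^ 2) μ :=
      Iv.const_mul _
    rw [integral_add I12 Iev, integral_add I1 Ie, integral_const_mul, hL2 u] at hmono
    have hev : ∫ x, Real.exp (∑ l, θ₀ l * ψ l x) * ∑ l, u l * ψ l x ∂μ
        = ∑ l, u l * α₀ l := by
      have heq : (fun x => Real.exp (∑ l, θ₀ l * ψ l x) * ∑ l, u l * ψ l x)
          = fun x => ∑ l, u l * (Real.exp (∑ l', θ₀ l' * ψ l' x) * ψ l x) := by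
        funext x
        rw [Finset.mul_sum]
        exact Finset.sum_congr rfl fun l _ => by ring
      rw [heq, integral_finset_sum _ fun l _ =>
        (hint θ₀ (ψ l) (C l) (hmeas l) (hC l)).const_mul (u l)]
      exact Finset.sum_congr rfl fun l _ => by rw [integral_const_mul]
    rw [hev] at hmono
    have hsplit : ∑ l, α l * θ l - ∑ l, α l * θ₀ l = ∑ l, α l * u l := by
      rw [← Finset.sum_sub_distrib]
      exact Finset.sum_congr rfl fun l _ => by simp only [hudef]; ring
    have hαu : ∑ l, α l * u l - ∑ l, u l * α₀ l = ∑ l, (α l - α₀ l) * u l := by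
      rw [← Finset.sum_sub_distrib]
      exact Finset.sum_congr rfl fun l _ => by ring
    have hCS : |∑ l, (α l - α₀ l) * u l| ≤ nα * n θ := by
      have := cs_abs (fun l => α l - α₀ l) u
      rw [hnu] at this
      exact this
    have hCS' : ∑ l, (α l - α₀ l) * u l ≤ nα * n θ := (le_abs_self _).trans hCS
    simp only [hgdef]
    have hZθ₀ : Z θ₀ = ∫ x, Real.exp (∑ l, θ₀ l * ψ l x) ∂μ := rfl
    have hZθ : Z θ = ∫ x, Real.exp (∑ l, θ l * ψ l x) ∂μ := rfl
    rw [← hZθ₀, ← hZθ] at hmono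
    rw [hn2]
    linarith [hmono, hsplit, hαu, hCS']
  -- interior local minima satisfy the moment equations
  have main : ∀ θs : Λ → ℝ, IsLocalMin g θs →
      ∀ l, ∫ x, Real.exp (∑ l', θs l' * ψ l' x) * ψ l x ∂μ = α l := by
    intro θs hloc l
    set a : E → ℝ := fun x => ∑ k, θs k * ψ k x with hadef
    set M : ℝ := ∑ k, |θs k| * C k with hMdef
    have hab : ∀ x, |a x| ≤ M := hsum θs
    set h : ℝ → ℝ :=
      fun t => (∫ x, Real.exp (a x + t * ψ l x) ∂μ) - (∑ k, α k * θs k) - t * α l with hhdef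
    have hsum1 : ∀ (t : ℝ) (x : E),
        ∑ k, (θs k + t * (Pi.single l (1:ℝ) : Λ → ℝ) k) * ψ k x = a x + t * ψ l x := by
      intro t x
      simp only [add_mul, Finset.sum_add_distrib]
      congr 1
      have hterm : ∀ k, t * (Pi.single l (1:ℝ) : Λ → ℝ) k * ψ k x = if k = l then t * ψ l x else 0 := by
        intro k
        rcases eq_or_ne k l with rfl | hkl
        · simp
        · simp [Pi.single_eq_of_ne hkl, hkl]
      rw [Finset.sum_congr rfl fun k _ => hterm k,
        Finset.sum_ite_eq' Finset.univ l (fun _ => t * ψ l x)]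
      simp
    have hsum2 : ∀ t : ℝ, ∑ k, α k * (θs k + t * (Pi.single l (1:ℝ) : Λ → ℝ) k)
        = (∑ k, α k * θs k) + t * α l := by
      intro t
      simp only [mul_add, Finset.sum_add_distrib]
      congr 1
      have hterm : ∀ k, α k * (t * (Pi.single l (1:ℝ) : Λ → ℝ) k) = if k = l then t * α l else 0 := by
        intro k
        rcases eq_or_ne k l with rfl | hkl
        · simp; ring
        · simp [Pi.single_eq_of_ne hkl, hkl]
      rw [Finset.sum_congr rfl fun k _ => hterm k,
        Finset.sum_ite_eq' Finset.univ l (fun _ => t * α l)]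
      simp
    have hcomp : ∀ t : ℝ, h t = g (θs + t • (Pi.single l (1:ℝ) : Λ → ℝ)) := by
      intro t
      simp only [hhdef, hgdef, hZdef, Pi.add_apply, Pi.smul_apply, smul_eq_mul]
      have hfn : (fun x => Real.exp (∑ k, (θs k + t * (Pi.single l (1:ℝ) : Λ → ℝ) k) * ψ k x))
          = fun x => Real.exp (a x + t * ψ l x) := funext fun x => by rw [hsum1 t x]
      rw [hfn, hsum2 t]
      ring
    have hlocmin : IsLocalMin h 0 := by
      have hcont : Continuous fun t : ℝ => θs + t • (Pi.single l (1:ℝ) : Λ → ℝ) :=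
        continuous_const.add (continuous_id.smul continuous_const)
      have h0 : θs + (0:ℝ) • (Pi.single l (1:ℝ) : Λ → ℝ) = θs := by simp
      have htend : Filter.Tendsto (fun t : ℝ => θs + t • (Pi.single l (1:ℝ) : Λ → ℝ))
          (nhds 0) (nhds θs) := by
        have := hcont.continuousAt (x := (0:ℝ))
        rwa [ContinuousAt, h0] at this
      have hev : ∀ᶠ t in nhds (0:ℝ), g θs ≤ g (θs + t • (Pi.single l (1:ℝ) : Λ → ℝ)) :=
        htend.eventually hloc
      have h00 : h 0 = g θs := by rw [hcomp 0, h0]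
      exact hev.mono fun t ht => by rw [h00, hcomp t]; exact ht
    have hFb : ∀ t : ℝ, |t| ≤ 1 → ∀ x, a x + t * ψ l x ≤ M + C l := by
      intro t ht x
      have h1 := (le_abs_self (a x)).trans (hab x)
      have h2 : |t * ψ l x| ≤ C l := by
        rw [abs_mul]
        calc |t| * |ψ l x| ≤ 1 * C l := mul_le_mul ht (hC l x) (abs_nonneg _) zero_le_one
          _ = C l := one_mul _
      linarith [le_abs_self (t * ψ l x)]
    have hd1 : HasDerivAt (fun t => ∫ x, Real.exp (a x + t * ψ l x) ∂μ)
        (∫ x, Real.exp (a x + 0 * ψ l x) * ψ l x ∂μ) 0 := by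
      refine (hasDerivAt_integral_of_dominated_loc_of_deriv_le (μ := μ)
        (F := fun t x => Real.exp (a x + t * ψ l x))
        (F' := fun t x => Real.exp (a x + t * ψ l x) * ψ l x)
        (x₀ := 0) (s := Metric.ball 0 1) (bound := fun _ => Real.exp (M + C l) * C l)
        (Metric.ball_mem_nhds 0 one_pos) ?_ ?_ ?_ ?_ ?_ ?_).2
      · exact Filter.Eventually.of_forall fun t =>
          ((msum θs).add ((hmeas l).const_mul t)).exp.aestronglyMeasurable
      · refine integrable_of_bdd (C := Real.exp (M + C l))
          ((msum θs).add ((hmeas l).const_mul 0)).exp ?_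
        intro x
        rw [abs_of_pos (Real.exp_pos _)]
        exact Real.exp_le_exp.2 (hFb 0 (by norm_num) x)
      · exact (((msum θs).add ((hmeas l).const_mul 0)).exp.mul (hmeas l)).aestronglyMeasurable
      · refine Filter.Eventually.of_forall fun x t ht => ?_
        have ht1 : |t| ≤ 1 := by
          rw [Metric.mem_ball, Real.dist_eq, sub_zero] at ht
          exact ht.le
        rw [Real.norm_eq_abs, abs_mul, abs_of_pos (Real.exp_pos _)]
        exact mul_le_mul (Real.exp_le_exp.2 (hFb t ht1 x)) (hC l x) (abs_nonneg _)
          (Real.exp_pos _).le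
      · exact integrable_const _
      · refine Filter.Eventually.of_forall fun x t _ => ?_
        exact ((hasDerivAt_mul_const (ψ l x)).const_add (a x)).exp
    have hd : HasDerivAt h ((∫ x, Real.exp (a x + 0 * ψ l x) * ψ l x ∂μ) - α l) 0 :=
      (hd1.sub_const _).sub (hasDerivAt_mul_const (α l))
    have hzero := hlocmin.hasDerivAt_eq_zero hd
    have hfn0 : (fun x => Real.exp (a x + 0 * ψ l x) * ψ l x)
        = fun x => Real.exp (∑ l', θs l' * ψ l' x) * ψ l x := by
      funext x
      simp [hadef]
    rw [hfn0] at hzero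
    linarith [hzero]
  -- conclude
  by_cases hlt : n θm < A⁻¹
  · have hKnhds : K ∈ nhds θm :=
      Filter.mem_of_superset ((isOpen_lt hncont continuous_const).mem_nhds hlt)
        fun θ hθ => show n θ ≤ A⁻¹ from le_of_lt hθ
    exact ⟨θm, main θm (hθmmin.isLocalMin hKnhds)⟩
  · push_neg at hlt
    have hneq : n θm = A⁻¹ := le_antisymm hθmK hlt
    have hgm : g θ₀ ≤ g θm := by
      have hBm := hB θm hθmK
      rw [hneq] at hBm
      have hc : nα * A⁻¹ ≤ Real.exp (-1) * Real.exp (-S) / 2 * (A⁻¹) ^ 2 := by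
        have h1 : nα ≤ 1 / (2 * Real.exp 1 * Real.exp S * A) := hclose
        have he1 := Real.exp_pos (1:ℝ)
        have heS := Real.exp_pos S
        calc nα * A⁻¹ ≤ (1 / (2 * Real.exp 1 * Real.exp S * A)) * A⁻¹ :=
              mul_le_mul_of_nonneg_right h1 (by positivity)
          _ = Real.exp (-1) * Real.exp (-S) / 2 * (A⁻¹) ^ 2 := by
              rw [Real.exp_neg, Real.exp_neg]
              field_simp
      exact le_trans (by linarith [hc]) hBm
    have hmin0 : IsMinOn g K θ₀ := fun σ hσ => le_trans hgm (hθmmin hσ)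
    have hn0 : n θ₀ = 0 := by simp [hndef]
    have h0lt : n θ₀ < A⁻¹ := by rw [hn0]; exact inv_pos.2 hApos
    have hKnhds : K ∈ nhds θ₀ :=
      Filter.mem_of_superset ((isOpen_lt hncont continuous_const).mem_nhds h0lt)
        fun θ hθ => show n θ ≤ A⁻¹ from le_of_lt hθ
    exact ⟨θ₀, main θ₀ (hmin0.isLocalMin hKnhds)⟩
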